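/- arXiv:1203.4976 — 3 statements merged into one kernel-verified Lean document; each statement's English description precedes it below -/
import Mathlib

section
/- Let k be a number field of degree d over ℚ having at least one real embedding. Then there exists α ∈ k such that ℚ(α) = k and H(α) ≤ (2/π)^(s/d) · |Δ_k|^(1/(2d)), where H is the absolute multiplicative Weil height, s is the number of complex places of k, and Δ_k is the discriminant of k. -/
open Polynomial NumberField

/-- The Mahler measure of an integer polynomial: the absolute value of the leading
coefficient times the product of `max 1 |z|` over the complex roots. -/
noncomputable def mahlerMeasure (f : Polynomial ℤ) : ℝ :=
  |(f.leadingCoeff : ℝ)| *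
    (((f.map (Int.castRingHom ℂ)).roots).map (fun z => max 1 ‖z‖)).prod

/-- The absolute multiplicative Weil height of an algebraic complex number, defined as
`M(f)^(1/deg f)` where `f` is an irreducible integer polynomial vanishing at `α`. -/
noncomputable def height (α : ℂ) : ℝ :=
  sInf {h : ℝ | ∃ f : Polynomial ℤ, Irreducible f ∧ Polynomial.aeval α f = 0 ∧
    h = mahlerMeasure f ^ ((f.natDegree : ℝ)⁻¹)}

open NumberField.InfinitePlace NumberField.mixedEmbedding MeasureTheory Module
open scoped IntermediateField NNReal ENNReal nonZeroDivisors Classical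

lemma mahlerMeasure_nonneg (f : Polynomial ℤ) : 0 ≤ mahlerMeasure f := by
  have h1 : (0:ℝ) ≤ (((f.map (Int.castRingHom ℂ)).roots).map
      (fun z => max 1 ‖z‖)).prod := by
    refine Multiset.prod_induction _ _ (fun a b ha hb => mul_nonneg ha hb) zero_le_one
      fun x hx => ?_
    obtain ⟨z, -, rfl⟩ := Multiset.mem_map.mp hx
    exact le_trans zero_le_one (le_max_left _ _)
  exact mul_nonneg (abs_nonneg _) h1

section aux

variable (K : Type*) [Field K] [NumberField K]

open NumberField.mixedEmbedding in
lemma mb_eq_aux :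
    minkowskiBound K (1 : (FractionalIdeal (𝓞 K)⁰ K)ˣ) =
      (convexBodyLTFactor K : ℝ≥0∞) *
        ((2 * NNReal.pi⁻¹) ^ nrComplexPlaces K * NNReal.sqrt ‖discr K‖₊ : ℝ≥0) := by
  classical
  rw [minkowskiBound, volume_fundamentalDomain_fractionalIdealLatticeBasis, Units.val_one,
    FractionalIdeal.absNorm_one, Rat.cast_one, ENNReal.ofReal_one, one_mul,
    volume_fundamentalDomain_latticeBasis, mixedEmbedding.finrank,
    ← card_add_two_mul_card_eq_rank]
  have hpi : (NNReal.pi : ℝ≥0) ≠ 0 := NNReal.pi_ne_zero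
  rw [show ((2:ℝ≥0∞)⁻¹ ^ nrComplexPlaces K * NNReal.sqrt ‖discr K‖₊ *
      2 ^ (nrRealPlaces K + 2 * nrComplexPlaces K) : ℝ≥0∞)
      = ((2⁻¹ ^ nrComplexPlaces K * NNReal.sqrt ‖discr K‖₊ *
        2 ^ (nrRealPlaces K + 2 * nrComplexPlaces K) : ℝ≥0) : ℝ≥0∞) by
    push_cast [ENNReal.coe_inv (two_ne_zero)]
    ring]
  rw [← ENNReal.coe_mul, ENNReal.coe_inj]
  rw [convexBodyLTFactor]
  have h2 : (2:ℝ≥0) ^ (nrRealPlaces K + 2 * nrComplexPlaces K)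
      = 2 ^ nrRealPlaces K * (2^2 : ℝ≥0) ^ nrComplexPlaces K := by
    rw [pow_add, pow_mul]
  rw [h2]
  have hpow : (NNReal.pi ^ nrComplexPlaces K) * ((2 * NNReal.pi⁻¹) ^ nrComplexPlaces K)
      = 2 ^ nrComplexPlaces K := by
    rw [← mul_pow, mul_comm (2:ℝ≥0) _, ← mul_assoc, mul_inv_cancel₀ hpi, one_mul]
  have h4 : ((2:ℝ≥0)⁻¹) ^ nrComplexPlaces K * ((2^2:ℝ≥0)) ^ nrComplexPlaces K
      = 2 ^ nrComplexPlaces K := by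
    rw [← mul_pow, show ((2:ℝ≥0)⁻¹ * 2^2) = 2 by
      rw [pow_two, ← mul_assoc, inv_mul_cancel₀ two_ne_zero, one_mul]]
  calc (2:ℝ≥0)⁻¹ ^ nrComplexPlaces K * NNReal.sqrt ‖discr K‖₊ *
        (2 ^ nrRealPlaces K * (2^2:ℝ≥0) ^ nrComplexPlaces K)
      = 2 ^ nrRealPlaces K * ((2⁻¹ ^ nrComplexPlaces K * (2^2:ℝ≥0) ^ nrComplexPlaces K)
          * NNReal.sqrt ‖discr K‖₊) := by ring
    _ = 2 ^ nrRealPlaces K * (2 ^ nrComplexPlaces K * NNReal.sqrt ‖discr K‖₊) := by rw [h4]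
    _ = 2 ^ nrRealPlaces K * ((NNReal.pi ^ nrComplexPlaces K * (2 * NNReal.pi⁻¹) ^ nrComplexPlaces K) * NNReal.sqrt ‖discr K‖₊) := by rw [hpow]
    _ = 2 ^ nrRealPlaces K * NNReal.pi ^ nrComplexPlaces K *
        ((2 * NNReal.pi⁻¹) ^ nrComplexPlaces K * NNReal.sqrt ‖discr K‖₊) := by ring

lemma exists_good_generator {w₀ : InfinitePlace K} (hw₀ : w₀.IsReal) :
    ∃ x : 𝓞 K, x ≠ 0 ∧ ℚ⟮(x : K)⟯ = ⊤ ∧ (∀ w : InfinitePlace K, w ≠ w₀ → w (x:K) < 1) ∧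
      w₀ (x : K) ≤
        (((2 * NNReal.pi⁻¹) ^ nrComplexPlaces K * NNReal.sqrt ‖discr K‖₊ : ℝ≥0) : ℝ) := by
  set T : ℝ≥0 := (2 * NNReal.pi⁻¹) ^ nrComplexPlaces K * NNReal.sqrt ‖discr K‖₊ with hT
  have hTpos : 0 < T := by
    apply mul_pos
    · exact pow_pos (mul_pos two_pos (by simpa using NNReal.pi_pos)) _
    · exact NNReal.sqrt_pos.mpr (nnnorm_pos.mpr (discr_ne_zero K))
  -- for every n, find a generator with bound T * (1 + 1/(n+1))
  have key : ∀ n : ℕ, ∃ x : 𝓞 K, x ≠ 0 ∧ (∀ w : InfinitePlace K, w ≠ w₀ → w (x:K) < 1) ∧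
      w₀ (x : K) < T * (1 + ((n : ℝ≥0) + 1)⁻¹) := by
    intro n
    set B : ℝ≥0 := T * (1 + ((n : ℝ≥0) + 1)⁻¹) with hB
    have hTB : T < B := by
      rw [hB]
      exact lt_mul_of_one_lt_right hTpos (lt_add_of_pos_right _ (by positivity))
    have hvol : minkowskiBound K ↑1 <
        volume (convexBodyLT K (fun w => if w = w₀ then B else 1)) := by
      rw [convexBodyLT_volume, ← Finset.prod_erase_mul _ _ (Finset.mem_univ w₀)]
      simp_rw [ite_pow, one_pow]
      rw [Finset.prod_ite_eq']
      simp_rw [Finset.notMem_erase, ite_false, mult, hw₀, ite_true, one_mul, pow_one]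
      rw [mb_eq_aux]
      refine ENNReal.mul_lt_mul_right ?_ ?_ (ENNReal.coe_lt_coe.mpr hTB)
      · exact ENNReal.coe_ne_zero.mpr (convexBodyLTFactor_ne_zero K)
      · exact ENNReal.coe_ne_top
    obtain ⟨x, hx0, hxlt⟩ := exists_ne_zero_mem_ringOfIntegers_lt K hvol
    refine ⟨x, hx0, fun w hw => ?_, ?_⟩
    · simpa [if_neg hw] using hxlt w
    · simpa [hB] using hxlt w₀
  choose a ha0 ha1 ha2 using key
  -- all the `a n` lie in a finite set
  set S : Set K := {x : K | IsIntegral ℤ x ∧ ∀ φ : K →+* ℂ, ‖φ x‖ ≤ max ((2 * T : ℝ≥0) : ℝ) 1}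
    with hS
  have hSfin : S.Finite := Embeddings.finite_of_norm_le K ℂ _
  haveI := hSfin.to_subtype
  have hmem : ∀ n : ℕ, ((a n : K) : K) ∈ S := by
    intro n
    refine ⟨RingOfIntegers.isIntegral_coe (a n), fun φ => ?_⟩
    have happ : ‖φ ((a n : K))‖ = (mk φ) ((a n : K)) := by
      rw [InfinitePlace.apply]
    rw [happ]
    by_cases h : mk φ = w₀
    · rw [h]
      refine le_trans (le_of_lt (ha2 n)) (le_max_of_le_left ?_)
      have h11 : ((n : ℝ≥0) + 1)⁻¹ ≤ 1 := by
        rw [inv_le_one_iff₀]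
        right; simp
      have : T * (1 + ((n : ℝ≥0) + 1)⁻¹) ≤ 2 * T := by
        calc T * (1 + ((n : ℝ≥0) + 1)⁻¹) ≤ T * 2 := by
              refine mul_le_mul_of_nonneg_left ?_ zero_le
              calc 1 + ((n : ℝ≥0) + 1)⁻¹ ≤ 1 + 1 := by gcongr
                _ = 2 := by norm_num
          _ = 2 * T := mul_comm _ _
      exact_mod_cast this
    · exact le_trans (le_of_lt (ha1 n _ h)) (le_max_right _ _)
  set g : ℕ → S := fun n => ⟨(a n : K), hmem n⟩ with hg
  obtain ⟨y, hy⟩ := Finite.exists_infinite_fiber g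
  have hinf : (g ⁻¹' {y}).Infinite := Set.infinite_coe_iff.mp hy
  obtain ⟨n₀, hn₀⟩ := hinf.nonempty
  refine ⟨a n₀, ha0 n₀,
    NumberField.is_primitive_element_of_infinitePlace_lt (ha0 n₀)
      (fun w' hw' => ha1 n₀ w' hw') (Or.inl hw₀), ha1 n₀, ?_⟩
  by_contra hcon
  push_neg at hcon
  set t : ℝ := w₀ ((a n₀ : K)) with ht
  have htT : (T : ℝ) < t := hcon
  obtain ⟨N, hN⟩ := exists_nat_gt ((T : ℝ) / (t - T))
  obtain ⟨m, hm_mem, hm_gt⟩ := hinf.exists_gt N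
  have hgm : (a m : K) = (a n₀ : K) := by
    have h1 : g m = y := hm_mem
    have h2 : g n₀ = y := hn₀
    exact Subtype.mk_eq_mk.mp (h1.trans h2.symm)
  have ht' : t < (T : ℝ) * (1 + ((m : ℝ) + 1)⁻¹) := by
    have := ha2 m
    rw [hgm] at this
    have h2 : ((T * (1 + ((m : ℝ≥0) + 1)⁻¹) : ℝ≥0) : ℝ) = (T:ℝ) * (1 + ((m:ℝ)+1)⁻¹) := by
      push_cast; ring
    rw [← h2]
    exact_mod_cast this
  have hm1 : (0:ℝ) < (m:ℝ) + 1 := by positivity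
  have hkey : ((m:ℝ)+1)⁻¹ * ((m:ℝ)+1) = 1 := inv_mul_cancel₀ (ne_of_gt hm1)
  have hNm : (N : ℝ) < (m : ℝ) := by exact_mod_cast hm_gt
  have htmT : 0 < t - T := by linarith
  have h3 : (T : ℝ) < ((m:ℝ)+1) * (t - T) := by
    have : (T : ℝ) / (t - T) < (m:ℝ) + 1 := by linarith
    rw [div_lt_iff₀ htmT] at this
    nlinarith
  nlinarith [mul_pos htmT hm1, (T:ℝ≥0).coe_nonneg]

lemma height_le_aux {w₀ : InfinitePlace K} (hw₀ : w₀.IsReal) {x : 𝓞 K} (hx0 : x ≠ 0)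
    (hgen : ℚ⟮(x : K)⟯ = ⊤) (hlt : ∀ w : InfinitePlace K, w ≠ w₀ → w (x:K) < 1) :
    mahlerMeasure (minpoly ℤ ((x : K))) ≤ w₀ (x : K) ∧
      Irreducible (minpoly ℤ ((x : K))) ∧
      (minpoly ℤ ((x : K))).natDegree = finrank ℚ K := by
  have hint : IsIntegral ℤ ((x : K)) := RingOfIntegers.isIntegral_coe x
  have hintQ : IsIntegral ℚ ((x : K)) := hint.tower_top
  set f : Polynomial ℤ := minpoly ℤ ((x : K)) with hf
  have hmonic : f.Monic := minpoly.monic hint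
  have hfQ : f.map (algebraMap ℤ ℚ) = minpoly ℚ ((x : K)) :=
    (minpoly.isIntegrallyClosed_eq_field_fractions' ℚ hint).symm
  have hirr : Irreducible f := by
    refine hmonic.irreducible_of_irreducible_map (algebraMap ℤ ℚ) f ?_
    rw [hfQ]
    exact minpoly.irreducible hintQ
  have hdeg : f.natDegree = finrank ℚ K := by
    rw [← (Field.primitive_element_iff_minpoly_natDegree_eq ℚ ((x : K))).mp hgen, ← hfQ,
      hmonic.natDegree_map]
  refine ⟨?_, hirr, hdeg⟩
  -- identify the complex roots
  have hmapc : f.map (Int.castRingHom ℂ) = (minpoly ℚ ((x : K))).map (algebraMap ℚ ℂ) := by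
    rw [← hfQ, Polynomial.map_map, Subsingleton.elim
      ((algebraMap ℚ ℂ).comp (algebraMap ℤ ℚ)) (Int.castRingHom ℂ)]
  have hsep : (f.map (Int.castRingHom ℂ)).Separable := by
    rw [hmapc]
    have hs : IsSeparable ℚ ((x : K)) := Algebra.IsSeparable.isSeparable ℚ _
    exact Polynomial.Separable.map hs
  have hnodup : (f.map (Int.castRingHom ℂ)).roots.Nodup := Polynomial.nodup_roots hsep
  have hroot : ∀ z ∈ (f.map (Int.castRingHom ℂ)).roots, ∃ φ : K →+* ℂ, φ (x : K) = z := by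
    intro z hz
    rw [hmapc] at hz
    have hz2 := (Polynomial.mem_roots'.mp hz).2
    have hz' : z ∈ (minpoly ℚ ((x : K))).rootSet ℂ := by
      rw [Polynomial.mem_rootSet]
      refine ⟨minpoly.ne_zero hintQ, ?_⟩
      rw [Polynomial.aeval_def, ← Polynomial.eval_map]
      exact hz2
    rw [← NumberField.Embeddings.range_eval_eq_rootSet_minpoly K ℂ] at hz'
    exact hz'
  set z₀ : ℂ := (InfinitePlace.embedding w₀) ((x : K)) with hz₀
  have habsz₀ : ‖z₀‖ = w₀ ((x : K)) := by
    rw [← norm_embedding_eq w₀ ((x : K))]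
  have habs : ∀ z ∈ (f.map (Int.castRingHom ℂ)).roots, z ≠ z₀ → ‖z‖ < 1 := by
    intro z hz hne
    obtain ⟨φ, rfl⟩ := hroot z hz
    have hφ : InfinitePlace.mk φ ≠ w₀ := by
      intro h
      rcases mk_eq_iff.mp (h.trans (mk_embedding w₀).symm) with h' | h'
      · exact hne (by rw [h'])
      · have : φ = InfinitePlace.embedding w₀ := by
          have h2 := congrArg ComplexEmbedding.conjugate h'
          rw [conjugate_embedding_eq_of_isReal hw₀] at h2
          exact (star_star φ).symm.trans h2
        exact hne (by rw [this])
    have := hlt _ hφ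
    rwa [InfinitePlace.apply] at this
  -- compute the Mahler measure
  have hw₀x : 1 ≤ w₀ ((x : K)) := one_le_of_lt_one hx0 (fun w hw => hlt w hw)
  rw [_root_.mahlerMeasure, hmonic.leadingCoeff]
  simp only [Int.cast_one, abs_one, one_mul]
  set R : Multiset ℂ := (f.map (Int.castRingHom ℂ)).roots with hR
  have hval : R.toFinset.val = R := by rw [Multiset.toFinset_val, hnodup.dedup]
  have hprodeq : (R.map (fun z => max 1 ‖z‖)).prod
      = R.toFinset.prod (fun z => max 1 ‖z‖) := by
    conv_lhs => rw [← hval]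
    rfl
  rw [hprodeq]
  have hfinal : R.toFinset.prod (fun z => max 1 ‖z‖) ≤ max 1 ‖z₀‖ := by
    by_cases hmem : z₀ ∈ R.toFinset
    · rw [Finset.prod_eq_single_of_mem z₀ hmem (fun z hz hne =>
        max_eq_left (le_of_lt (habs z (Multiset.mem_toFinset.mp hz) hne)))]
    · rw [Finset.prod_eq_one (fun z hz => max_eq_left (le_of_lt
        (habs z (Multiset.mem_toFinset.mp hz) (fun h => hmem (h ▸ hz)))))]
      exact le_max_left _ _
  refine le_trans hfinal ?_
  rw [habsz₀, max_eq_right hw₀x]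

end aux

/-- A number field with at least one real embedding has a generator `α` with
`H(α) ≤ (2/π)^(s/d) |Δ_k|^(1/(2d))`. -/
theorem generator_of_real_embedding (K : IntermediateField ℚ ℂ) [NumberField K]
    (hreal : ∃ v : InfinitePlace K, v.IsReal) :
    ∃ α : ℂ, α ∈ K ∧ IntermediateField.adjoin ℚ {α} = K ∧
      height α ≤ (2 / Real.pi) ^ ((InfinitePlace.nrComplexPlaces K : ℝ) / (Module.finrank ℚ K : ℝ)) *
        |(NumberField.discr K : ℝ)| ^ (1 / (2 * (Module.finrank ℚ K : ℝ))) := by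
  obtain ⟨w₀, hw₀⟩ := hreal
  obtain ⟨x, hx0, hgen, hlt, hbound⟩ := exists_good_generator K hw₀
  obtain ⟨hM, hirr, hdeg⟩ := height_le_aux K hw₀ hx0 hgen hlt
  set α : ℂ := ((x : K) : ℂ) with hα
  have hαK : α ∈ K := ((x : K)).2
  have hadj : IntermediateField.adjoin ℚ {α} = K := by
    have h := congrArg IntermediateField.lift hgen
    erw [IntermediateField.lift_adjoin_simple, IntermediateField.lift_top] at h
    exact h
  refine ⟨α, hαK, hadj, ?_⟩
  -- the degree is positive
  have hd0 : 0 < finrank ℚ K := finrank_pos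
  -- `f` vanishes at `α`
  set f : Polynomial ℤ := minpoly ℤ ((x : K)) with hf
  have haeval : Polynomial.aeval α f = 0 := by
    have h0 : Polynomial.aeval ((x : K)) f = 0 := minpoly.aeval ℤ ((x : K))
    have : α = algebraMap K ℂ ((x : K)) := rfl
    rw [this, Polynomial.aeval_algebraMap_apply, h0, map_zero]
  -- bound the height by the Mahler measure expression
  have hbdd : BddBelow {h : ℝ | ∃ g : Polynomial ℤ, Irreducible g ∧ Polynomial.aeval α g = 0 ∧
      h = mahlerMeasure g ^ ((g.natDegree : ℝ)⁻¹)} := by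
    refine ⟨0, fun h hh => ?_⟩
    obtain ⟨g, -, -, rfl⟩ := hh
    exact Real.rpow_nonneg (mahlerMeasure_nonneg g) _
  have hmem : mahlerMeasure f ^ ((f.natDegree : ℝ)⁻¹) ∈ {h : ℝ | ∃ g : Polynomial ℤ,
      Irreducible g ∧ Polynomial.aeval α g = 0 ∧
      h = mahlerMeasure g ^ ((g.natDegree : ℝ)⁻¹)} := ⟨f, hirr, haeval, rfl⟩
  have hheight : height α ≤ mahlerMeasure f ^ ((f.natDegree : ℝ)⁻¹) := csInf_le hbdd hmem
  -- the coercion of the bound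
  have hTr : (((2 * NNReal.pi⁻¹) ^ nrComplexPlaces K * NNReal.sqrt ‖discr K‖₊ : ℝ≥0) : ℝ)
      = (2 / Real.pi) ^ nrComplexPlaces K * Real.sqrt |(discr K : ℝ)| := by
    rw [NNReal.coe_mul, NNReal.coe_pow, NNReal.coe_mul, NNReal.coe_inv, NNReal.coe_real_pi,
      Real.coe_sqrt, coe_nnnorm, Int.norm_eq_abs, div_eq_mul_inv]
    norm_cast
  rw [hTr] at hbound
  -- combine
  have hMT : mahlerMeasure f ≤ (2 / Real.pi) ^ nrComplexPlaces K * Real.sqrt |(discr K : ℝ)| :=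
    le_trans hM hbound
  have hrpow : mahlerMeasure f ^ ((f.natDegree : ℝ)⁻¹)
      ≤ ((2 / Real.pi) ^ nrComplexPlaces K * Real.sqrt |(discr K : ℝ)|)
        ^ ((finrank ℚ K : ℝ)⁻¹) := by
    rw [hdeg]
    exact Real.rpow_le_rpow (mahlerMeasure_nonneg f) hMT
      (inv_nonneg.mpr (Nat.cast_nonneg _))
  refine le_trans hheight (le_trans hrpow (le_of_eq ?_))
  have hpi : (0:ℝ) < 2 / Real.pi := by positivity
  rw [Real.mul_rpow (le_of_lt (pow_pos hpi _)) (Real.sqrt_nonneg _),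
    ← Real.rpow_natCast (2 / Real.pi) (nrComplexPlaces K),
    ← Real.rpow_mul (le_of_lt hpi),
    Real.sqrt_eq_rpow, ← Real.rpow_mul (abs_nonneg _)]
  rw [show ((nrComplexPlaces K : ℕ) : ℝ) * ((finrank ℚ K : ℕ) : ℝ)⁻¹
      = ((nrComplexPlaces K : ℕ) : ℝ) / ((finrank ℚ K : ℕ) : ℝ) from (div_eq_mul_inv _ _).symm,
    show (1/2 : ℝ) * ((finrank ℚ K : ℕ) : ℝ)⁻¹ = 1 / (2 * ((finrank ℚ K : ℕ) : ℝ)) by ring]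
end

section
/- Let d ≤ -1 be a squarefree integer and let f(x) = ax² + bx + c ∈ ℤ[x] with 1 ≤ a, 1 ≤ c, gcd(a,b,c) = 1, and b² - 4ac = d·e² for some nonzero integer e. If α is a root of f, then ℚ(α) = ℚ(√d) and H(α) = max{a, c}^(1/2). -/
open Polynomial

/-- Lemma 7.1: a root `α` of `ax² + bx + c` with `a, c ≥ 1`, `gcd(a,b,c) = 1` and
discriminant `d·e²` (`d ≤ -1` squarefree, `e ≠ 0`) generates `ℚ(√d)` and has
height `max{a,c}^(1/2)`. -/
theorem quadratic_generator_height (d : ℤ) (hd : d ≤ -1) (hsq : Squarefree d)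
    (a b c e : ℤ) (ha : 1 ≤ a) (hc : 1 ≤ c) (hg : Int.gcd a (Int.gcd b c) = 1)
    (he : e ≠ 0) (hdisc : b ^ 2 - 4 * a * c = d * e ^ 2)
    (α : ℂ) (hα : (a : ℂ) * α ^ 2 + (b : ℂ) * α + (c : ℂ) = 0) :
    (∀ x : ℂ, x ^ 2 = (d : ℂ) →
      IntermediateField.adjoin ℚ {α} = IntermediateField.adjoin ℚ {x}) ∧
    height α = Real.sqrt ((max a c : ℤ) : ℝ) := by
  have ha0 : (a : ℂ) ≠ 0 := Int.cast_ne_zero.mpr (by omega)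
  have ha0' : a ≠ 0 := by omega
  -- key identity
  set w : ℂ := 2 * (a : ℂ) * α + (b : ℂ) with hw
  have hdiscC : (b : ℂ) ^ 2 - 4 * a * c = (d : ℂ) * (e : ℂ) ^ 2 := by
    exact_mod_cast congrArg (fun n : ℤ => (n : ℂ)) hdisc
  have hkey : w ^ 2 = (d : ℂ) * (e : ℂ) ^ 2 := by
    rw [hw]; linear_combination 4 * (a : ℂ) * hα + hdiscC
  have hde : (d : ℝ) * (e : ℝ) ^ 2 < 0 := by
    have h1 : (0:ℝ) < (e:ℝ)^2 := by positivity
    have h2 : (d:ℝ) < 0 := by exact_mod_cast (by omega : d < 0)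
    exact mul_neg_of_neg_of_pos h2 h1
  have hcast : (d : ℂ) * (e : ℂ) ^ 2 = ((d * e ^ 2 : ℤ) : ℂ) := by push_cast; ring
  have hwim2 : (w ^ 2).im = 0 := by
    rw [hkey, hcast, Complex.intCast_im]
  have hwre2 : (w ^ 2).re = (d : ℝ) * (e : ℝ) ^ 2 := by
    rw [hkey, hcast, Complex.intCast_re]; push_cast; ring
  have him : w.im ≠ 0 := by
    intro h
    rw [pow_two, Complex.mul_re, h] at hwre2
    nlinarith
  have hre : w.re = 0 := by
    rw [pow_two, Complex.mul_im] at hwim2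
    rcases mul_eq_zero.mp (by linarith [hwim2] : w.re * w.im = 0) with h | h
    · exact h
    · exact absurd h him
  have hconjw : (starRingEnd ℂ) w = -w := by
    apply Complex.ext <;> simp [hre]
  -- β = conj α
  set β : ℂ := (starRingEnd ℂ) α with hβ
  have hconja : ∀ n : ℤ, (starRingEnd ℂ) (n : ℂ) = (n : ℂ) := fun n => by
    simp
  have hwb : (starRingEnd ℂ) w = 2 * (a : ℂ) * β + (b : ℂ) := by
    rw [hw, map_add, map_mul, map_mul]
    simp [hβ, map_ofNat, map_intCast]
  have hsum : (a : ℂ) * (α + β) = -(b : ℂ) := by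
    have := hconjw
    rw [hwb, hw] at this
    linear_combination this / 2
  have hprod : (a : ℂ) * (α * β) = (c : ℂ) := by
    linear_combination α * hsum - hα
  -- imaginary part of α
  have haim : α.im ≠ 0 := by
    intro h
    apply him
    rw [hw]
    simp [Complex.add_im, Complex.mul_im, h]
  have hbim : β.im ≠ 0 := by
    rw [hβ]; simpa using haim
  -- the quadratic polynomial
  set g : ℤ[X] := C a * X ^ 2 + C b * X + C c with hgdef
  have hgdeg : g.natDegree = 2 := natDegree_quadratic ha0'
  have hglc : g.leadingCoeff = a := leadingCoeff_quadratic ha0'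
  have hmapC : g.map (Int.castRingHom ℂ) =
      C (a : ℂ) * X ^ 2 + C (b : ℂ) * X + C (c : ℂ) := by
    simp [hgdef]
  have hfac : g.map (Int.castRingHom ℂ) = C (a : ℂ) * ((X - C α) * (X - C β)) := by
    rw [hmapC]
    have hb' : (b : ℂ) = (a : ℂ) * (-(α + β)) := by linear_combination hsum
    have hc' : (c : ℂ) = (a : ℂ) * (α * β) := hprod.symm
    rw [hb', hc']
    rw [map_mul, map_neg, map_add, map_mul, map_mul]
    ring
  have hroots : (g.map (Int.castRingHom ℂ)).roots = {α, β} := by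
    rw [hfac, roots_C_mul _ ha0,
      roots_mul (mul_ne_zero (X_sub_C_ne_zero α) (X_sub_C_ne_zero β)),
      roots_X_sub_C, roots_X_sub_C]
    rfl
  -- Mahler measure of g
  have habs : ‖β‖ = ‖α‖ := by
    rw [hβ]; exact Complex.norm_conj α
  have hnorm : (a : ℝ) * (‖α‖) ^ 2 = (c : ℝ) := by
    have h1 : (a : ℂ) * (Complex.normSq α : ℝ) = (c : ℂ) := by
      rw [← Complex.mul_conj]; exact hprod
    have h2 : ((a * Complex.normSq α : ℝ) : ℂ) = ((c : ℝ) : ℂ) := by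
      push_cast at h1 ⊢
      exact_mod_cast h1
    have h3 := Complex.ofReal_inj.mp h2
    rw [Complex.sq_norm]
    exact_mod_cast h3
  have hM : mahlerMeasure g = ((max a c : ℤ) : ℝ) := by
    unfold _root_.mahlerMeasure
    rw [hroots, hglc]
    have haR : (0 : ℝ) < (a : ℝ) := by exact_mod_cast (by omega : (0:ℤ) < a)
    have habsa : |((a : ℤ) : ℝ)| = (a : ℝ) := abs_of_pos haR
    rw [habsa]
    have : ({α, β} : Multiset ℂ).map (fun z => max 1 ‖z‖)
        = {max 1 (‖α‖), max 1 (‖β‖)} := rfl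
    rw [this]
    have hprod2 : ({max 1 (‖α‖), max 1 (‖β‖)} : Multiset ℝ).prod
        = max 1 (‖α‖) * max 1 (‖β‖) := by
      simp
    rw [hprod2, habs]
    set t := ‖α‖ with ht
    have ht0 : 0 ≤ t := norm_nonneg α
    have hmax : max 1 t * max 1 t = max 1 (t ^ 2) := by
      rcases le_total t 1 with h | h
      · rw [max_eq_left h, max_eq_left (by nlinarith), mul_one]
      · rw [max_eq_right h, max_eq_right (by nlinarith), pow_two]
    rw [hmax]
    rw [mul_max_of_nonneg _ _ haR.le, mul_one, hnorm]
    push_cast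
    rfl
  -- primitivity and irreducibility of g
  have hprim : g.IsPrimitive := by
    rw [isPrimitive_iff_isUnit_of_C_dvd]
    intro r hr
    rw [C_dvd_iff_dvd_coeff] at hr
    have h0 := hr 0
    have h1 := hr 1
    have h2 := hr 2
    have e0 : g.coeff 0 = c := by
      simp only [hgdef, coeff_add, coeff_C_mul, coeff_X_pow, coeff_X, coeff_C]; norm_num
    have e1 : g.coeff 1 = b := by
      simp only [hgdef, coeff_add, coeff_C_mul, coeff_X_pow, coeff_X, coeff_C]; norm_num
    have e2 : g.coeff 2 = a := by
      simp only [hgdef, coeff_add, coeff_C_mul, coeff_X_pow, coeff_X, coeff_C]; norm_num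
    rw [e0] at h0; rw [e1] at h1; rw [e2] at h2
    have : r ∣ (Int.gcd a (Int.gcd b c) : ℤ) :=
      Int.dvd_coe_gcd h2 (Int.dvd_coe_gcd h1 h0)
    rw [hg] at this
    exact isUnit_of_dvd_one this
  -- no rational roots
  set gQ : ℚ[X] := g.map (Int.castRingHom ℚ) with hgQ
  have hgQdeg : gQ.natDegree = 2 := by
    rw [hgQ, natDegree_map_eq_of_injective (Int.cast_injective), hgdeg]
  have hgQirr : Irreducible gQ := by
    rw [irreducible_iff_roots_eq_zero_of_degree_le_three (by omega) (by omega)]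
    rw [Multiset.eq_zero_iff_forall_notMem]
    intro r hr
    have hgQ0 : gQ ≠ 0 := by
      intro h; rw [h] at hgQdeg; simp at hgQdeg
    rw [mem_roots hgQ0] at hr
    have heval : (a : ℚ) * r ^ 2 + (b : ℚ) * r + (c : ℚ) = 0 := by
      have := hr
      rw [IsRoot.def, hgQ, hgdef] at this
      simpa [eval_map, eval₂_add, eval₂_mul] using this
    have hevalC : (a : ℂ) * (r : ℂ) ^ 2 + (b : ℂ) * (r : ℂ) + (c : ℂ) = 0 := by
      exact_mod_cast congrArg (fun q : ℚ => (q : ℂ)) heval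
    -- (r : ℂ) is a root of the complex polynomial, hence equals α or β
    have : ((r : ℂ) - α) * ((r : ℂ) - β) = 0 := by
      have expand : (a : ℂ) * (((r:ℂ) - α) * ((r:ℂ) - β))
          = (a : ℂ) * (r:ℂ)^2 + (b : ℂ) * (r:ℂ) + (c : ℂ) := by
        linear_combination (-(r:ℂ)) * hsum + hprod
      have := expand.trans hevalC
      exact (mul_eq_zero.mp this).resolve_left ha0
    rcases mul_eq_zero.mp this with h | h
    · apply haim
      rw [← sub_eq_zero.mp h]
      simp
    · apply hbim
      rw [← sub_eq_zero.mp h]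
      simp
  have hgirr : Irreducible g :=
    (IsPrimitive.Int.irreducible_iff_irreducible_map_cast hprim).mpr hgQirr
  have hgroot : Polynomial.aeval α g = 0 := by
    have : Polynomial.aeval α g = (a:ℂ) * α ^ 2 + (b:ℂ) * α + (c:ℂ) := by
      simp [hgdef]
    rw [this, hα]
  have hgQ0 : gQ ≠ 0 := by
    intro h; rw [h] at hgQdeg; simp at hgQdeg
  have haevalgQ : Polynomial.aeval α gQ = 0 := by
    rw [hgQ, show Int.castRingHom ℚ = algebraMap ℤ ℚ from rfl,
      aeval_map_algebraMap]
    exact hgroot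
  have halg : IsIntegral ℚ α := (IsAlgebraic.isIntegral ⟨gQ, hgQ0, haevalgQ⟩)
  have hminirr : Irreducible (minpoly ℚ α) := minpoly.irreducible halg
  -- uniqueness of irreducible integer polynomials vanishing at α
  have huniq : ∀ f : ℤ[X], Irreducible f → Polynomial.aeval α f = 0 →
      f = g ∨ f = -g := by
    intro f hf hf0
    have hfd : f.natDegree ≠ 0 := by
      intro h
      have hfC : f = C (f.coeff 0) := eq_C_of_natDegree_eq_zero h
      rw [hfC] at hf0
      simp only [aeval_C, algebraMap_int_eq, eq_intCast, map_intCast] at hf0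
      have : f.coeff 0 = 0 := by exact_mod_cast hf0
      rw [this, map_zero] at hfC
      exact hf.ne_zero hfC
    have hfprim : f.IsPrimitive := by
      rw [isPrimitive_iff_isUnit_of_C_dvd]
      intro r hr
      rcases hr with ⟨s, hs⟩
      rcases hf.isUnit_or_isUnit hs with h | h
      · exact isUnit_C.mp h
      · exfalso
        rcases Polynomial.isUnit_iff.mp h with ⟨u, hu, hus⟩
        rw [hs, ← hus, ← map_mul] at hfd
        exact hfd (natDegree_C _)
    set fQ : ℚ[X] := f.map (Int.castRingHom ℚ) with hfQ
    have hfQirr : Irreducible fQ :=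
      (IsPrimitive.Int.irreducible_iff_irreducible_map_cast hfprim).mp hf
    have haevalfQ : Polynomial.aeval α fQ = 0 := by
      rw [hfQ, show Int.castRingHom ℚ = algebraMap ℤ ℚ from rfl,
        aeval_map_algebraMap]
      exact hf0
    have hdvdf : minpoly ℚ α ∣ fQ := minpoly.dvd ℚ α haevalfQ
    have hdvdg : minpoly ℚ α ∣ gQ := minpoly.dvd ℚ α haevalgQ
    have hassocf : Associated (minpoly ℚ α) fQ :=
      hminirr.associated_of_dvd hfQirr hdvdf
    have hassocg : Associated (minpoly ℚ α) gQ :=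
      hminirr.associated_of_dvd hgQirr hdvdg
    have hassoc : Associated fQ gQ := hassocf.symm.trans hassocg
    have hfg : f ∣ g :=
      (IsPrimitive.Int.dvd_iff_map_cast_dvd_map_cast f g hfprim).mpr
        hassoc.dvd
    have hgf : g ∣ f :=
      (IsPrimitive.Int.dvd_iff_map_cast_dvd_map_cast g f hprim).mpr
        hassoc.symm.dvd
    obtain ⟨u, hu⟩ := associated_of_dvd_dvd hfg hgf
    rcases Polynomial.isUnit_iff.mp u.isUnit with ⟨r, hru, hrC⟩
    rcases Int.isUnit_iff.mp hru with rfl | rfl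
    · left; rw [← hu, ← hrC]; simp
    · right; rw [← hu, ← hrC]; simp [mul_neg]
  have hMneg : mahlerMeasure (-g) = mahlerMeasure g := by
    unfold _root_.mahlerMeasure
    rw [Polynomial.map_neg]
    have h1 : (-(g.map (Int.castRingHom ℂ))).roots = (g.map (Int.castRingHom ℂ)).roots := by
      rw [show -(g.map (Int.castRingHom ℂ)) = C (-1 : ℂ) * (g.map (Int.castRingHom ℂ)) by
        simp, roots_C_mul _ (by norm_num : (-1 : ℂ) ≠ 0)]
    rw [h1, leadingCoeff_neg]
    push_cast
    rw [abs_neg]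
  have hval : mahlerMeasure g ^ ((g.natDegree : ℝ)⁻¹)
      = Real.sqrt ((max a c : ℤ) : ℝ) := by
    rw [hM, hgdeg, Real.sqrt_eq_rpow]
    norm_num
  have hset : {h : ℝ | ∃ f : Polynomial ℤ, Irreducible f ∧ Polynomial.aeval α f = 0 ∧
      h = mahlerMeasure f ^ ((f.natDegree : ℝ)⁻¹)}
      = {Real.sqrt ((max a c : ℤ) : ℝ)} := by
    ext h
    simp only [Set.mem_setOf_eq, Set.mem_singleton_iff]
    constructor
    · rintro ⟨f, hf, hf0, rfl⟩
      rcases huniq f hf hf0 with rfl | rfl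
      · exact hval
      · rw [natDegree_neg, hMneg]
        exact hval
    · rintro rfl
      exact ⟨g, hgirr, hgroot, hval.symm⟩
  have hheight : height α = Real.sqrt ((max a c : ℤ) : ℝ) := by
    unfold height
    rw [hset, csInf_singleton]
  refine ⟨?_, hheight⟩
  -- field part
  intro x hx
  have hsplit : (w - x * (e : ℂ)) * (w + x * (e : ℂ)) = 0 := by
    linear_combination hkey - (e : ℂ) ^ 2 * hx
  have he0 : (e : ℂ) ≠ 0 := Int.cast_ne_zero.mpr he
  have h2a0 : (2 * (a : ℂ)) ≠ 0 := by
    simp [ha0]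
  have hx_mem : x ∈ IntermediateField.adjoin ℚ {x} :=
    IntermediateField.mem_adjoin_simple_self ℚ x
  have hα_mem : α ∈ IntermediateField.adjoin ℚ {α} :=
    IntermediateField.mem_adjoin_simple_self ℚ α
  have hint : ∀ (K : IntermediateField ℚ ℂ) (n : ℤ), ((n : ℤ) : ℂ) ∈ K := by
    intro K n
    exact_mod_cast intCast_mem K n
  have h2a_mem : ∀ K : IntermediateField ℚ ℂ, (2 * (a : ℂ)) ∈ K := by
    intro K
    have := hint K (2 * a)
    push_cast at this
    exact this
  rcases mul_eq_zero.mp hsplit with h | h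
  · -- w = x * e
    have hwx : w = x * (e : ℂ) := by linear_combination h
    have hαx : α ∈ IntermediateField.adjoin ℚ {x} := by
      have : α = (x * (e : ℂ) - (b : ℂ)) / (2 * (a : ℂ)) := by
        rw [eq_div_iff h2a0]
        linear_combination hwx
      rw [this]
      exact div_mem (sub_mem (mul_mem hx_mem (hint _ e)) (hint _ b)) (h2a_mem _)
    have hxα : x ∈ IntermediateField.adjoin ℚ {α} := by
      have : x = (2 * (a : ℂ) * α + (b : ℂ)) / (e : ℂ) := by
        rw [eq_div_iff he0]
        linear_combination -hwx
      rw [this]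
      exact div_mem (add_mem (mul_mem (h2a_mem _) hα_mem) (hint _ b)) (hint _ e)
    exact le_antisymm
      (IntermediateField.adjoin_le_iff.mpr (Set.singleton_subset_iff.mpr hαx))
      (IntermediateField.adjoin_le_iff.mpr (Set.singleton_subset_iff.mpr hxα))
  · -- w = -(x * e)
    have hwx : w = -(x * (e : ℂ)) := by linear_combination h
    have hαx : α ∈ IntermediateField.adjoin ℚ {x} := by
      have : α = (-(x * (e : ℂ)) - (b : ℂ)) / (2 * (a : ℂ)) := by
        rw [eq_div_iff h2a0]
        linear_combination hwx
      rw [this]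
      exact div_mem (sub_mem (neg_mem (mul_mem hx_mem (hint _ e))) (hint _ b)) (h2a_mem _)
    have hxα : x ∈ IntermediateField.adjoin ℚ {α} := by
      have : x = (-(2 * (a : ℂ) * α) - (b : ℂ)) / (e : ℂ) := by
        rw [eq_div_iff he0]
        linear_combination hwx
      rw [this]
      exact div_mem (sub_mem (neg_mem (mul_mem (h2a_mem _) hα_mem)) (hint _ b)) (hint _ e)
    exact le_antisymm
      (IntermediateField.adjoin_le_iff.mpr (Set.singleton_subset_iff.mpr hαx))
      (IntermediateField.adjoin_le_iff.mpr (Set.singleton_subset_iff.mpr hxα))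
end

section
/- The field ℚ(√(-163)) has no generator over ℚ of Weil height strictly smaller than √41; that is, for every α with ℚ(α) = ℚ(√(-163)), one has H(α) ≥ √41. -/
open Polynomial

set_option maxRecDepth 10000 in
private lemma keyNat : ∀ M ∈ Finset.Icc 1 6, ∀ B ∈ Finset.range 80, ∀ A ∈ Finset.Icc 1 40,
    ¬((B^2+163*M^2) % (4*A) = 0 ∧ (B^2+163*M^2)/(4*A) ≤ 40) := by decide

lemma keyInt (a b c m : ℤ) (hac : 0 < a*c) (hm : m ≠ 0)
    (h : b^2 - 4*a*c = -163*m^2) : 41 ≤ max |a| |c| := by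
  by_contra hlt
  push_neg at hlt
  have ha40 : |a| ≤ 40 := by have := le_max_left |a| |c|; omega
  have hc40 : |c| ≤ 40 := by have := le_max_right |a| |c|; omega
  have ha0 : a ≠ 0 := by rintro rfl; simp at hac
  have hc0 : c ≠ 0 := by rintro rfl; simp at hac
  set A := a.natAbs with hA
  set C := c.natAbs with hC
  set B := b.natAbs with hB
  set M := m.natAbs with hM
  have e1 : (A:ℤ) = |a| := (Int.abs_eq_natAbs a).symm
  have e2 : (B:ℤ) = |b| := (Int.abs_eq_natAbs b).symm
  have e3 : (C:ℤ) = |c| := (Int.abs_eq_natAbs c).symm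
  have e4 : (M:ℤ) = |m| := (Int.abs_eq_natAbs m).symm
  have hkey : 4 * A * C = B^2 + 163 * M^2 := by
    have h1 : (4:ℤ) * A * C = B^2 + 163 * M^2 := by
      rw [e1, e2, e3, e4, sq_abs, sq_abs, mul_assoc, ← abs_mul, abs_of_pos hac]
      linarith
    exact_mod_cast h1
  have hA1 : 1 ≤ A ∧ A ≤ 40 := by constructor <;> omega
  have hC1 : 1 ≤ C ∧ C ≤ 40 := by constructor <;> omega
  have hM1 : 1 ≤ M := by omega
  have hM6 : M ≤ 6 := by nlinarith [hA1.2, hC1.2, hkey, sq_nonneg B]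
  have hB80 : B < 80 := by nlinarith [hA1.2, hC1.2, hkey, hM1]
  have := keyNat M (Finset.mem_Icc.mpr ⟨hM1, hM6⟩) B (Finset.mem_range.mpr hB80)
    A (Finset.mem_Icc.mpr ⟨hA1.1, hA1.2⟩)
  apply this
  constructor
  · rw [← hkey]; exact Nat.mul_mod_right (4*A) C
  · rw [← hkey, Nat.mul_div_cancel_left C (by omega : 0 < 4*A)]
    exact hC1.2

lemma x_facts (x : ℂ) (hx : x^2 = -163) : x.re = 0 ∧ x.im^2 = 163 := by
  have h1 : (x^2).re = -163 := by rw [hx]; simp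
  have h2 : (x^2).im = 0 := by rw [hx]; simp
  rw [pow_two, Complex.mul_re] at h1
  rw [pow_two, Complex.mul_im] at h2
  have him : x.im ≠ 0 := by intro h0; rw [h0] at h1; nlinarith
  have hre : x.re = 0 := by
    have h3 : x.re * x.im = 0 := by linarith
    exact (mul_eq_zero.mp h3).resolve_right him
  exact ⟨hre, by nlinarith⟩

noncomputable def Tfield (x : ℂ) (hx : x^2 = -163) : IntermediateField ℚ ℂ where
  carrier := {z | ∃ p q : ℚ, z = p + q * x}
  add_mem' := by
    rintro z w ⟨p, q, rfl⟩ ⟨r, s, rfl⟩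
    exact ⟨p + r, q + s, by push_cast; ring⟩
  mul_mem' := by
    rintro z w ⟨p, q, rfl⟩ ⟨r, s, rfl⟩
    exact ⟨p * r - 163 * (q * s), p * s + q * r, by push_cast; linear_combination (q:ℂ) * s * hx⟩
  inv_mem' := by
    rintro z ⟨p, q, rfl⟩
    by_cases hz : (p:ℂ) + q * x = 0
    · rw [hz]; exact ⟨0, 0, by simp⟩
    have hpq : ¬(p = 0 ∧ q = 0) := by
      rintro ⟨rfl, rfl⟩; simp at hz
    have hd : (p^2 + 163 * q^2 : ℚ) ≠ 0 := by
      intro h0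
      apply hpq
      constructor <;> nlinarith [sq_nonneg p, sq_nonneg q]
    have hdC : ((p:ℂ)^2 + 163 * q^2) ≠ 0 := by
      intro h0; apply hd; exact_mod_cast h0
    have key : (((p / (p^2 + 163*q^2) : ℚ) : ℂ) + ((-q / (p^2 + 163*q^2) : ℚ) : ℂ) * x)
        * ((p:ℂ) + q * x) = 1 := by
      push_cast
      field_simp
      linear_combination (-(q:ℂ)^2) * hx
    exact ⟨_, _, inv_eq_of_mul_eq_one_left key⟩
  algebraMap_mem' := fun r => ⟨r, 0, by simp⟩

lemma mem_Tfield (x : ℂ) (hx : x^2 = -163) (z : ℂ)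
    (hz : z ∈ IntermediateField.adjoin ℚ {x}) : ∃ p q : ℚ, z = p + q * x := by
  have hle : IntermediateField.adjoin ℚ {x} ≤ Tfield x hx := by
    rw [IntermediateField.adjoin_le_iff]
    rintro z rfl
    exact ⟨0, 1, by push_cast; ring⟩
  exact hle hz

lemma x_integral (x : ℂ) (hx : x^2 = -163) : IsIntegral ℚ x := by
  refine ⟨X^2 + C 163, monic_X_pow_add_C _ (two_ne_zero), ?_⟩
  simp [hx]

lemma finrank_two (x : ℂ) (hx : x^2 = -163) :
    Module.finrank ℚ (IntermediateField.adjoin ℚ {x}) = 2 := by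
  have hint := x_integral x hx
  have him : x.im ≠ 0 := by
    intro h0
    have h1 : (x^2).re = -163 := by rw [hx]; simp
    rw [pow_two, Complex.mul_re, h0] at h1
    nlinarith
  have hdvd : minpoly ℚ x ∣ X^2 + C 163 := minpoly.dvd ℚ x (by simp [hx])
  have hPmo : (X^2 + C (163:ℚ)).Monic := monic_X_pow_add_C _ (two_ne_zero)
  have hdeg2 : (minpoly ℚ x).natDegree ≤ 2 := by
    have h := Polynomial.natDegree_le_of_dvd hdvd hPmo.ne_zero
    rwa [Polynomial.natDegree_X_pow_add_C] at h
  have hdeg1 : 2 ≤ (minpoly ℚ x).natDegree := by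
    rw [minpoly.two_le_natDegree_iff hint]
    rintro ⟨r, hr⟩
    apply him
    rw [← hr]
    simp [Complex.ofReal_ratCast]
  have : (minpoly ℚ x).natDegree = 2 := by omega
  rw [IntermediateField.adjoin.finrank hint, this]

noncomputable def Rfield : IntermediateField ℚ ℂ where
  carrier := Set.range ((↑) : ℝ → ℂ)
  add_mem' := by rintro z w ⟨p, rfl⟩ ⟨r, rfl⟩; exact ⟨p + r, by push_cast; ring⟩
  mul_mem' := by rintro z w ⟨p, rfl⟩ ⟨r, rfl⟩; exact ⟨p * r, by push_cast; ring⟩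
  inv_mem' := by rintro z ⟨p, rfl⟩; exact ⟨p⁻¹, by push_cast; ring⟩
  algebraMap_mem' := fun r => ⟨r, by simp⟩

lemma alpha_im_ne (α x : ℂ) (hx : x^2 = -163)
    (heq : IntermediateField.adjoin ℚ {α} = IntermediateField.adjoin ℚ {x}) :
    α.im ≠ 0 := by
  intro h0
  have hxmem : x ∈ IntermediateField.adjoin ℚ {α} := by
    rw [heq]; exact IntermediateField.mem_adjoin_simple_self ℚ x
  have hle : IntermediateField.adjoin ℚ {α} ≤ Rfield := by
    rw [IntermediateField.adjoin_le_iff, Set.singleton_subset_iff]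
    exact ⟨α.re, by rw [← Complex.re_add_im α, h0]; simp⟩
  obtain ⟨r, hr⟩ := hle hxmem
  have : x.im = 0 := by rw [← hr]; simp
  have := (x_facts x hx).2
  rw [this] at *
  nlinarith [(x_facts x hx).2, this]

set_option maxHeartbeats 1000000 in
lemma main_bound (α x : ℂ) (hx : x^2 = -163)
    (heq : IntermediateField.adjoin ℚ {α} = IntermediateField.adjoin ℚ {x})
    (f : Polynomial ℤ) (hirr : Irreducible f) (hf0 : Polynomial.aeval α f = 0) :
    Real.sqrt 41 ≤ mahlerMeasure f ^ ((f.natDegree : ℝ)⁻¹) := by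
  obtain ⟨hxre, hxim⟩ := x_facts x hx
  have hxim0 : x.im ≠ 0 := fun h => by rw [h] at hxim; norm_num at hxim
  have hαim : α.im ≠ 0 := alpha_im_ne α x hx heq
  -- α is integral
  have hK : FiniteDimensional ℚ (IntermediateField.adjoin ℚ {x}) :=
    IntermediateField.adjoin.finiteDimensional (x_integral x hx)
  have hαmem : α ∈ IntermediateField.adjoin ℚ {x} := by
    rw [← heq]; exact IntermediateField.mem_adjoin_simple_self ℚ α
  have hαint : IsIntegral ℚ α := by
    have h1 : IsIntegral ℚ (⟨α, hαmem⟩ : IntermediateField.adjoin ℚ {x}) :=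
      IsIntegral.of_finite ℚ _
    have h2 := h1.map (IntermediateField.adjoin ℚ {x}).val
    simpa using h2
  -- degree facts
  have hd0 : f.natDegree ≠ 0 := by
    intro h
    have hc := Polynomial.eq_C_of_natDegree_eq_zero h
    rw [hc] at hf0
    simp at hf0
    rw [hc, hf0] at hirr
    simp at hirr
  have hfne : f ≠ 0 := hirr.ne_zero
  have hprim : f.IsPrimitive := by
    intro r hr
    obtain ⟨t, ht⟩ := hr
    rcases hirr.isUnit_or_isUnit ht with h | h
    · exact Polynomial.isUnit_C.mp h
    · exfalso
      apply hd0
      have htd : t.natDegree = 0 := Polynomial.natDegree_eq_zero_of_isUnit h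
      have hr0 : r ≠ 0 := by rintro rfl; simp at ht; exact hfne ht
      have ht0 : t ≠ 0 := by rintro rfl; simp at ht; exact hfne ht
      rw [ht, Polynomial.natDegree_mul (by simpa using hr0) ht0, htd,
        Polynomial.natDegree_C]
  have hirrQ : Irreducible (f.map (algebraMap ℤ ℚ)) :=
    (hprim.irreducible_iff_irreducible_map_fraction_map).mp hirr
  have hfQ0 : Polynomial.aeval α (f.map (algebraMap ℤ ℚ)) = 0 := by
    rw [Polynomial.aeval_map_algebraMap]; exact hf0
  have hassoc : Associated (minpoly ℚ α) (f.map (algebraMap ℤ ℚ)) :=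
    (minpoly.irreducible hαint).associated_of_dvd hirrQ (minpoly.dvd ℚ α hfQ0)
  have hdeg : f.natDegree = 2 := by
    have h1 : (f.map (algebraMap ℤ ℚ)).natDegree = f.natDegree :=
      Polynomial.natDegree_map_eq_of_injective (fun a b => by exact_mod_cast id) f
    have h2 : (minpoly ℚ α).natDegree = 2 := by
      rw [← IntermediateField.adjoin.finrank hαint]
      rw [heq]
      exact finrank_two x hx
    have h3 := Polynomial.natDegree_eq_of_degree_eq
      (Polynomial.degree_eq_degree_of_associated hassoc)
    omega
  -- coefficients
  set a := f.coeff 2 with ha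
  set b := f.coeff 1 with hb
  set c := f.coeff 0 with hc
  have hlead : f.leadingCoeff = a := by rw [Polynomial.leadingCoeff, hdeg]
  have ha0 : a ≠ 0 := by
    rw [← hlead]; exact Polynomial.leadingCoeff_ne_zero.mpr hfne
  -- evaluation formula
  have heval : ∀ z : ℂ, Polynomial.eval z (f.map (Int.castRingHom ℂ))
      = a * z^2 + b * z + c := by
    intro z
    rw [Polynomial.eval_map, Polynomial.eval₂_eq_sum_range, hdeg]
    rw [Finset.sum_range_succ, Finset.sum_range_succ, Finset.sum_range_succ,
      Finset.sum_range_zero]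
    simp only [eq_intCast, Int.cast_id, ha, hb, hc]
    push_cast
    ring
  have hα2 : (a:ℂ) * α^2 + b * α + c = 0 := by
    rw [← heval α, Polynomial.eval_map]
    rw [show (Int.castRingHom ℂ) = algebraMap ℤ ℂ from rfl, ← Polynomial.aeval_def]
    exact hf0
  -- p, q decomposition
  obtain ⟨p, q, hpq⟩ := mem_Tfield x hx α hαmem
  have hαre : α.re = p := by rw [hpq]; simp [hxre]
  have hαim' : α.im = q * x.im := by rw [hpq]; simp [hxre]
  have hq0 : q ≠ 0 := by
    intro h
    apply hαim
    rw [hαim', h]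
    simp
  -- real and imaginary parts of the root equation
  have hre : (a:ℝ) * (p^2 - 163 * q^2) + b * p + c = 0 := by
    have h1 := congrArg Complex.re hα2
    simp only [Complex.add_re, Complex.mul_re, Complex.intCast_re, Complex.intCast_im,
      Complex.zero_re, pow_two, Complex.mul_im] at h1
    rw [hαre, hαim'] at h1
    push_cast
    linear_combination h1 + (a:ℝ) * (q:ℝ)^2 * hxim
  have him : (a:ℝ) * (2 * p * q) + b * q = 0 := by
    have h1 := congrArg Complex.im hα2
    simp only [Complex.add_im, Complex.mul_im, Complex.intCast_re, Complex.intCast_im,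
      Complex.zero_im, pow_two, Complex.mul_re] at h1
    rw [hαre, hαim'] at h1
    have h2 : x.im * ((a:ℝ) * (2 * p * q) + b * q) = 0 := by
      push_cast
      linear_combination h1
    rcases mul_eq_zero.mp h2 with h | h
    · exact absurd h hxim0
    · push_cast
      exact_mod_cast h
  -- rational identities
  have himQ : (a:ℚ) * (2 * p * q) + b * q = 0 := by exact_mod_cast him
  have h1Q : 2 * (a:ℚ) * p + b = 0 := by
    have hq0' : ((2 * (a:ℚ) * p + b) * q : ℚ) = 0 := by linear_combination himQ
    rcases mul_eq_zero.mp hq0' with h | h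
    · exact h
    · exact absurd h hq0
  have h2Q : (a:ℚ) * (p^2 - 163 * q^2) + b * p + c = 0 := by
    exact_mod_cast hre
  -- discriminant
  set Q : ℚ := 2 * a * q with hQdef
  have hQ0 : Q ≠ 0 := by
    simp only [hQdef, mul_ne_zero_iff]
    refine ⟨⟨by norm_num, by exact_mod_cast ha0⟩, hq0⟩
  have hD : ((b^2 - 4*a*c : ℤ) : ℚ) = -163 * Q^2 := by
    push_cast
    linear_combination ((b:ℚ) + 2*a*p) * h1Q - 4*(a:ℚ)*h2Q
  -- Q is an integer
  set D : ℤ := b^2 - 4*a*c with hDdef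
  have hden0 : ((Q.den:ℚ)) ≠ 0 := by
    exact_mod_cast Q.den_ne_zero
  have hQnum : ((Q.num : ℚ)) = Q * Q.den := by
    have h := Rat.num_div_den Q
    rw [div_eq_iff hden0] at h
    exact h
  have hint2 : 163 * Q.num^2 = -D * (Q.den:ℤ)^2 := by
    have hcast : ((163 * Q.num^2 : ℤ) : ℚ) = ((-D * (Q.den:ℤ)^2 : ℤ) : ℚ) := by
      push_cast
      rw [hQnum]
      linear_combination ((Q.den:ℚ))^2 * hD
    exact_mod_cast hcast
  have hden1 : Q.den = 1 := by
    have hcop : Nat.Coprime Q.num.natAbs Q.den := Q.reduced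
    have hdvd : (Q.den:ℕ)^2 ∣ 163 * Q.num.natAbs^2 := by
      refine ⟨(-D).toNat, ?_⟩
      have hDneg : D < 0 := by
        have : (D:ℚ) < 0 := by
          rw [hD]
          have : (0:ℚ) < Q^2 := by positivity
          nlinarith
        exact_mod_cast this
      have htn : ((-D).toNat : ℤ) = -D := Int.toNat_of_nonneg (by omega)
      have e : ((Q.num.natAbs:ℤ)) = |Q.num| := (Int.abs_eq_natAbs _).symm
      have : ((Q.num.natAbs:ℤ))^2 * 163 = ((Q.den:ℕ)^2 : ℤ) * ((-D).toNat : ℤ) := by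
        rw [e, sq_abs, htn]
        push_cast
        linarith [hint2]
      have goal : 163 * Q.num.natAbs^2 = (Q.den)^2 * (-D).toNat := by
        have h2 : ((163 * Q.num.natAbs^2 : ℕ) : ℤ) = (((Q.den)^2 * (-D).toNat : ℕ) : ℤ) := by
          push_cast at this ⊢
          linarith [this]
        exact_mod_cast h2
      rw [goal]
    have hdvd163 : (Q.den)^2 ∣ 163 := by
      refine (Nat.Coprime.dvd_of_dvd_mul_right ?_ hdvd)
      exact ((hcop.symm).pow 2 2)
    have h163 : Nat.Prime 163 := by norm_num
    have hd163 : Q.den ∣ 163 := dvd_trans (dvd_pow_self Q.den (by norm_num)) hdvd163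
    rcases (Nat.Prime.eq_one_or_self_of_dvd h163 _ hd163) with h | h
    · exact h
    · exfalso
      rw [h] at hdvd163
      have := Nat.le_of_dvd (by norm_num) hdvd163
      norm_num at this
  have hm0 : Q.num ≠ 0 := Rat.num_ne_zero.mpr hQ0
  have hDm : b^2 - 4*a*c = -163 * Q.num^2 := by
    have hden' : (Q.den:ℤ) = 1 := by exact_mod_cast hden1
    rw [hden'] at hint2
    have : D = -163 * Q.num^2 := by linarith [hint2]
    linarith [this, hDdef.ge, hDdef.le]
  -- a c positive product
  have hac : 0 < a * c := by
    have h5 : 0 < Q.num^2 := lt_of_le_of_ne (sq_nonneg _) (Ne.symm (pow_ne_zero 2 hm0))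
    nlinarith [sq_nonneg b, hDm, h5]
  have hmax : (41:ℤ) ≤ max |a| |c| := keyInt a b c Q.num hac hm0 hDm
  -- roots of the complex polynomial
  set g := f.map (Int.castRingHom ℂ) with hgdef
  have hinj : Function.Injective (Int.castRingHom ℂ) := fun u v huv =>
    Int.cast_injective huv
  have hg0 : g ≠ 0 := (Polynomial.map_ne_zero_iff hinj).mpr hfne
  have hgdeg : g.natDegree = 2 := by
    rw [hgdef, Polynomial.natDegree_map_eq_of_injective hinj, hdeg]
  have hcard : g.roots.card = 2 := by
    rw [← hgdeg]
    exact (Polynomial.splits_iff_card_roots.mp (IsAlgClosed.splits g))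
  have hαroot : α ∈ g.roots := by
    rw [Polynomial.mem_roots hg0]
    rw [Polynomial.IsRoot, heval]
    exact hα2
  have hconj2 : (a:ℂ) * ((starRingEnd ℂ) α)^2 + b * ((starRingEnd ℂ) α) + c = 0 := by
    have h := congrArg (starRingEnd ℂ) hα2
    simpa using h
  have hconjroot : (starRingEnd ℂ) α ∈ g.roots := by
    rw [Polynomial.mem_roots hg0]
    rw [Polynomial.IsRoot, heval]
    exact hconj2
  have hne : (starRingEnd ℂ) α ≠ α := by
    rw [Ne, Complex.conj_eq_iff_im]
    exact hαim
  have hpair : ({α, (starRingEnd ℂ) α} : Multiset ℂ) ≤ g.roots := by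
    rw [Multiset.le_iff_count]
    intro z
    by_cases h1 : z = α
    · subst h1
      have : Multiset.count z ({z, (starRingEnd ℂ) z} : Multiset ℂ) = 1 := by
        rw [Multiset.insert_eq_cons, Multiset.count_cons_self,
          Multiset.count_singleton, if_neg (fun h => hne h.symm)]
      rw [this]
      exact Multiset.one_le_count_iff_mem.mpr hαroot
    · by_cases h2 : z = (starRingEnd ℂ) α
      · subst h2
        have : Multiset.count ((starRingEnd ℂ) α)
            ({α, (starRingEnd ℂ) α} : Multiset ℂ) = 1 := by
          rw [Multiset.insert_eq_cons, Multiset.count_cons_of_ne hne,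
            Multiset.count_singleton, if_pos rfl]
        rw [this]
        exact Multiset.one_le_count_iff_mem.mpr hconjroot
      · have : Multiset.count z ({α, (starRingEnd ℂ) α} : Multiset ℂ) = 0 := by
          rw [Multiset.insert_eq_cons, Multiset.count_cons_of_ne h1,
            Multiset.count_singleton, if_neg h2]
        rw [this]
        exact Nat.zero_le _
  have hroots : g.roots = {α, (starRingEnd ℂ) α} := by
    refine (Multiset.eq_of_le_of_card_le hpair ?_).symm
    rw [hcard]
    simp
  -- compute the Mahler measure
  have hnormval : Complex.normSq α = (p:ℝ)^2 + 163*(q:ℝ)^2 := by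
    rw [Complex.normSq_apply, hαre, hαim']
    linear_combination (q:ℝ)^2 * hxim
  have hcQ : (c:ℚ) = a * (p^2 + 163*q^2) := by linear_combination h2Q - p * h1Q
  have hcreal : (c:ℝ) = (a:ℝ) * Complex.normSq α := by
    rw [hnormval]
    exact_mod_cast hcQ
  have hprodeq : ((g.roots).map (fun z => max 1 ‖z‖)).prod
      = max 1 (Complex.normSq α) := by
    rw [hroots]
    rw [Multiset.insert_eq_cons, Multiset.map_cons, Multiset.prod_cons,
      Multiset.map_singleton, Multiset.prod_singleton]
    rw [Complex.norm_conj]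
    rcases le_total 1 ‖α‖ with h | h
    · rw [max_eq_right h, max_eq_right (by nlinarith [Complex.sq_norm α])]
      rw [← Complex.sq_norm α]
      ring
    · rw [max_eq_left h, max_eq_left (by nlinarith [Complex.sq_norm α, norm_nonneg α])]
      ring
  have hMM : mahlerMeasure f = max |(a:ℝ)| |(c:ℝ)| := by
    unfold _root_.mahlerMeasure
    rw [hlead, ← hgdef, hprodeq]
    rw [mul_max_of_nonneg _ _ (abs_nonneg (a:ℝ)), mul_one]
    congr 1
    rw [hcreal, abs_mul, abs_of_nonneg (Complex.normSq_nonneg α)]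
  -- conclude
  have hM41 : (41:ℝ) ≤ mahlerMeasure f := by
    rw [hMM]
    have : ((max |a| |c| : ℤ) : ℝ) = max |(a:ℝ)| |(c:ℝ)| := by
      push_cast
      rfl
    rw [← this]
    exact_mod_cast hmax
  have hMpos : (0:ℝ) ≤ mahlerMeasure f := by linarith
  rw [hdeg]
  have hsqrt : Real.sqrt 41 = (41:ℝ) ^ (((2:ℕ):ℝ))⁻¹ := by
    rw [Real.sqrt_eq_rpow]
    norm_num
  rw [hsqrt]
  exact Real.rpow_le_rpow (by norm_num) hM41 (by norm_num)

lemma exists_poly (α x : ℂ) (hx : x^2 = -163)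
    (heq : IntermediateField.adjoin ℚ {α} = IntermediateField.adjoin ℚ {x}) :
    ∃ f : Polynomial ℤ, Irreducible f ∧ Polynomial.aeval α f = 0 := by
  have hK : FiniteDimensional ℚ (IntermediateField.adjoin ℚ {x}) :=
    IntermediateField.adjoin.finiteDimensional (x_integral x hx)
  have hαmem : α ∈ IntermediateField.adjoin ℚ {x} := by
    rw [← heq]; exact IntermediateField.mem_adjoin_simple_self ℚ α
  have hαint : IsIntegral ℚ α := by
    have h1 : IsIntegral ℚ (⟨α, hαmem⟩ : IntermediateField.adjoin ℚ {x}) :=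
      IsIntegral.of_finite ℚ _
    have h2 := h1.map (IntermediateField.adjoin ℚ {x}).val
    simpa using h2
  set p₀ := minpoly ℚ α with hp₀def
  have hp0 : p₀ ≠ 0 := minpoly.ne_zero hαint
  have hirr0 : Irreducible p₀ := minpoly.irreducible hαint
  set f₀ := IsLocalization.integerNormalization (nonZeroDivisors ℤ) p₀ with hf₀def
  set f := f₀.primPart with hfdef
  have hf₀0 : f₀ ≠ 0 := by
    intro h
    exact hp0 ((IsFractionRing.integerNormalization_eq_zero_iff).mp h)
  have hprim : f.IsPrimitive := Polynomial.isPrimitive_primPart f₀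
  obtain ⟨s, hs⟩ := IsLocalization.integerNormalization_map_to_map (nonZeroDivisors ℤ) p₀
  have hs0 : ((s:ℤ):ℚ) ≠ 0 := by
    exact_mod_cast nonZeroDivisors.coe_ne_zero s
  have hcontent : f₀.content ≠ 0 := by
    rw [Ne, Polynomial.content_eq_zero_iff]; exact hf₀0
  have hcne : ((f₀.content : ℚ)) ≠ 0 := by exact_mod_cast hcontent
  have hcp : f₀ = C f₀.content * f := f₀.eq_C_content_mul_primPart
  have hmain : C ((f₀.content : ℚ)) * (f.map (algebraMap ℤ ℚ)) = C ((s:ℤ):ℚ) * p₀ := by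
    have h1 : f₀.map (algebraMap ℤ ℚ) = C ((f₀.content : ℚ)) * f.map (algebraMap ℤ ℚ) := by
      conv_lhs => rw [hcp]
      rw [Polynomial.map_mul, Polynomial.map_C]
      norm_num
    rw [← h1, hs, Algebra.smul_def]
    simp [algebraMap_eq, Polynomial.C_eq_algebraMap]
  have hmapeq : f.map (algebraMap ℤ ℚ) = C (((s:ℤ):ℚ) / (f₀.content:ℚ)) * p₀ := by
    apply mul_left_cancel₀ (show (C ((f₀.content:ℚ)) : Polynomial ℚ) ≠ 0 from
      fun h => hcne (by simpa using h))
    rw [hmain, ← mul_assoc, ← Polynomial.C_mul]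
    congr 2
    field_simp
  have hirrmap : Irreducible (f.map (algebraMap ℤ ℚ)) := by
    rw [hmapeq]
    have hk : (((s:ℤ):ℚ) / (f₀.content:ℚ)) ≠ 0 := div_ne_zero hs0 hcne
    have hassoc : Associated p₀ (C (((s:ℤ):ℚ) / (f₀.content:ℚ)) * p₀) :=
      ⟨(Polynomial.isUnit_C.mpr (isUnit_iff_ne_zero.mpr hk)).unit, by
        simp [mul_comm]⟩
    exact hassoc.irreducible hirr0
  have hfirr : Irreducible f := hprim.irreducible_iff_irreducible_map_fraction_map.mpr hirrmap
  have hfa : Polynomial.aeval α f = 0 := by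
    have h0 : Polynomial.aeval α f₀ = 0 :=
      IsLocalization.integerNormalization_aeval_eq_zero (nonZeroDivisors ℤ) p₀
        (minpoly.aeval ℚ α)
    rw [hcp] at h0
    rw [map_mul, Polynomial.aeval_C] at h0
    rcases mul_eq_zero.mp h0 with h | h
    · exfalso
      apply hcontent
      have : ((f₀.content : ℤ) : ℂ) = 0 := by rw [← h]; simp
      exact_mod_cast this
    · exact h
  exact ⟨f, hfirr, hfa⟩

/-- Every generator `α` of `ℚ(√-163)` over `ℚ` satisfies `H(α) ≥ √41`. -/
theorem height_generator_ge_sqrt_41 (α : ℂ)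
    (hgen : ∃ x : ℂ, x ^ 2 = (-163 : ℂ) ∧
      IntermediateField.adjoin ℚ {α} = IntermediateField.adjoin ℚ {x}) :
    Real.sqrt 41 ≤ height α := by
  obtain ⟨x, hx, heq⟩ := hgen
  apply le_csInf
  · obtain ⟨f, hf1, hf2⟩ := exists_poly α x hx heq
    exact ⟨_, f, hf1, hf2, rfl⟩
  · rintro h ⟨f, hf1, hf2, rfl⟩
    exact main_bound α x hx heq f hf1 hf2
end
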